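/- Let K ⊂ K' ⊂ ℝ^n be compact sets, and let 𝓕 be a family of closed balls such that for every x ∈ K there exists R_x > 0 with closure(B_R(x)) ∈ 𝓕 for all 0 < R ≤ R_x. Let φ ∈ C_c(K', [0,∞)) and ε > 0. Then there exist finitely many functions χ_1, …, χ_q such that: (i) each χ_p is continuous, compactly supported in some ball B_R(x) with x ∈ K and 0 < R ≤ R_x, nonnegative, and rotationally symmetric about x; (ii) Σ_p χ_p ≤ φ on ℝ^n and ‖Σ_p χ_p − φ‖_{C^0(K)} ≤ ε. -/

import Mathlib

open MeasureTheory Metric Filter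
open scoped ENNReal NNReal

noncomputable section

/-- cutoff helper: `cutf a s d = max 0 (min 1 ((a - d)/s))`. -/
def cutf (a s d : ℝ) : ℝ := max 0 (min 1 ((a - d) / s))

lemma cutf_nonneg (a s d : ℝ) : 0 ≤ cutf a s d := le_max_left _ _

lemma cutf_le_one (a s d : ℝ) : cutf a s d ≤ 1 :=
  max_le zero_le_one (min_le_left _ _)

lemma cutf_eq_one {a s d : ℝ} (hs : 0 < s) (h : d ≤ a - s) : cutf a s d = 1 := by
  have h1 : (1 : ℝ) ≤ (a - d) / s := (le_div_iff₀ hs).2 (by linarith)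
  rw [cutf, min_eq_left h1, max_eq_right zero_le_one]

lemma lt_of_cutf_ne_zero {a s d : ℝ} (hs : 0 < s) (h : cutf a s d ≠ 0) : d < a := by
  by_contra hd
  push_neg at hd
  have : (a - d) / s ≤ 0 := div_nonpos_of_nonpos_of_nonneg (by linarith) hs.le
  apply h
  rw [cutf, max_eq_left (le_trans (min_le_right _ _) this)]

lemma cutf_continuous (a s : ℝ) : Continuous (cutf a s) := by
  unfold cutf
  fun_prop

theorem step_lemma {n : ℕ} {N : ℕ} {τ : ℝ} (hτ : 1 < τ)
    (hN : IsEmpty (Besicovitch.SatelliteConfig (EuclideanSpace ℝ (Fin n)) N τ))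
    (K : Set (EuclideanSpace ℝ (Fin n))) (hK : IsCompact K)
    (𝓕 : Set (Set (EuclideanSpace ℝ (Fin n))))
    (h𝓕 : ∀ x ∈ K, ∃ Rx : ℝ, 0 < Rx ∧
      ∀ R : ℝ, 0 < R → R ≤ Rx → Metric.closedBall x R ∈ 𝓕)
    (u : EuclideanSpace ℝ (Fin n) → ℝ)
    (hu : Continuous u) (huc : HasCompactSupport u) (hupos : ∀ z, 0 ≤ u z)
    (M : ℝ) (hM : 0 < M) (hKM : ∀ z ∈ K, u z ≤ M) :
    ∃ (q : ℕ) (χ : Fin q → EuclideanSpace ℝ (Fin n) → ℝ),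
      (∀ p : Fin q,
        Continuous (χ p) ∧ (∀ z, 0 ≤ χ p z) ∧
        ∃ x ∈ K, ∃ R : ℝ, 0 < R ∧ Metric.closedBall x R ∈ 𝓕 ∧
          HasCompactSupport (χ p) ∧ tsupport (χ p) ⊆ Metric.ball x R ∧
          (∀ z w, dist z x = dist w x → χ p z = χ p w)) ∧
      (∀ z, ∑ p, χ p z ≤ u z) ∧
      (∀ z ∈ K, u z - ∑ p, χ p z ≤ (1 - 1 / (4 * (N + 1))) * M) := by
  classical
  have hNpos : (0 : ℝ) < 4 * (N + 1) := by positivity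
  have hfrac : 1 / (4 * ((N : ℝ) + 1)) ≤ 1 / 4 := by
    apply one_div_le_one_div_of_le (by norm_num)
    have : (0:ℝ) ≤ N := Nat.cast_nonneg N
    linarith
  have hθhalf : M / 2 ≤ (1 - 1 / (4 * (N + 1))) * M := by
    have : 1 / (4 * ((N : ℝ) + 1)) ≤ 1 / 2 := le_trans hfrac (by norm_num)
    nlinarith
  -- the set where u is large
  set K₁ : Set (EuclideanSpace ℝ (Fin n)) := K ∩ u ⁻¹' Set.Ici (M / 2) with hK₁def
  have hK₁c : IsCompact K₁ := hK.inter_right (isClosed_Ici.preimage hu)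
  have hK₁K : K₁ ⊆ K := Set.inter_subset_left
  rcases Set.eq_empty_or_nonempty K₁ with hemp | hne
  · refine ⟨0, Fin.elim0, fun p => p.elim0, fun z => by simp [hupos z], fun z hz => ?_⟩
    have : ¬ (M / 2 ≤ u z) := by
      intro h
      have : z ∈ K₁ := ⟨hz, h⟩
      simp [hemp] at this
    push_neg at this
    simp only [Finset.univ_eq_empty, Finset.sum_empty]
    linarith
  -- uniform continuity
  obtain ⟨δ, hδ, hδu⟩ : ∃ δ > 0, ∀ a b : EuclideanSpace ℝ (Fin n), dist a b < δ → |u a - u b| < M / 4 := by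
    have hUC : UniformContinuous u := huc.uniformContinuous_of_continuous hu
    obtain ⟨δ, hδ, h⟩ := Metric.uniformContinuous_iff.1 hUC (M / 4) (by positivity)
    exact ⟨δ, hδ, fun a b hab => by simpa [Real.dist_eq] using h hab⟩
  -- radii
  have hRex : ∀ x : K₁, ∃ Rx : ℝ, 0 < Rx ∧
      ∀ R : ℝ, 0 < R → R ≤ Rx → Metric.closedBall (x : EuclideanSpace ℝ (Fin n)) R ∈ 𝓕 :=
    fun x => h𝓕 x (hK₁K x.2)
  choose R hRpos hRF using hRex
  set r : K₁ → ℝ := fun x => min (R x) (δ / 2) with hrdef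
  have hrpos : ∀ x, 0 < r x := fun x => lt_min (hRpos x) (by positivity)
  have hrδ : ∀ x, r x ≤ δ / 2 := fun x => min_le_right _ _
  have hrR : ∀ x, r x ≤ R x := fun x => min_le_left _ _
  -- Besicovitch families
  obtain ⟨s, hsd, hscov⟩ := Besicovitch.exist_disjoint_covering_families hτ hN
    (⟨Subtype.val, r, hrpos, δ / 2, hrδ⟩ : Besicovitch.BallPackage K₁ (EuclideanSpace ℝ (Fin n)))
  -- covering indexed by pairs
  have hcov : K₁ ⊆ ⋃ p : Fin N × K₁,
      (if p.2 ∈ s p.1 then ball (p.2 : EuclideanSpace ℝ (Fin n)) (r p.2) else ∅) := by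
    intro z hz
    have hzr : z ∈ Set.range (Subtype.val : K₁ → EuclideanSpace ℝ (Fin n)) := ⟨⟨z, hz⟩, rfl⟩
    have h3 := hscov hzr
    simp only [Set.mem_iUnion] at h3
    obtain ⟨i, j, hj, hb⟩ := h3
    exact Set.mem_iUnion.2 ⟨(i, j), by simp [hj, hb]⟩
  obtain ⟨t₀, ht₀⟩ := hK₁c.elim_finite_subcover _
    (fun p : Fin N × K₁ => by
      split
      · exact isOpen_ball
      · exact isOpen_empty) hcov
  set t : Finset (Fin N × K₁) := t₀.filter (fun p => p.2 ∈ s p.1) with htdef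
  have htmem : ∀ p ∈ t, p.2 ∈ s p.1 := fun p hp => (Finset.mem_filter.1 hp).2
  have htcov : ∀ z ∈ K₁, ∃ p ∈ t, dist z (p.2 : EuclideanSpace ℝ (Fin n)) < r p.2 := by
    intro z hz
    have := ht₀ hz
    simp only [Set.mem_iUnion] at this
    obtain ⟨p, hpt, hpz⟩ := this
    by_cases hps : p.2 ∈ s p.1
    · rw [if_pos hps] at hpz
      exact ⟨p, Finset.mem_filter.2 ⟨hpt, hps⟩, by simpa [dist_comm] using hpz⟩
    · rw [if_neg hps] at hpz
      exact absurd hpz (Set.notMem_empty z)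
  -- shrinking: find ζ > 0 with covering by shrunk balls
  obtain ⟨ζ, hζpos, hζcov⟩ : ∃ ζ > 0, ∀ z ∈ K₁, ∃ p ∈ t, dist z (p.2 : EuclideanSpace ℝ (Fin n)) < r p.2 - ζ := by
    have hcov2 : K₁ ⊆ ⋃ m : ℕ, ⋃ p ∈ t, ball ((p.2 : K₁) : EuclideanSpace ℝ (Fin n)) (r p.2 - 1 / (m + 1)) := by
      intro z hz
      obtain ⟨p, hpt, hpz⟩ := htcov z hz
      obtain ⟨m, hm⟩ := exists_nat_one_div_lt (show (0:ℝ) < r p.2 - dist z (p.2 : EuclideanSpace ℝ (Fin n)) by linarith)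
      refine Set.mem_iUnion.2 ⟨m, Set.mem_iUnion₂.2 ⟨p, hpt, ?_⟩⟩
      rw [mem_ball]
      push_cast at hm ⊢
      linarith
    obtain ⟨ms, hms⟩ := hK₁c.elim_finite_subcover _
      (fun m : ℕ => isOpen_biUnion fun p _ => isOpen_ball) hcov2
    set m₀ := ms.sup id with hm₀
    refine ⟨1 / (m₀ + 1), by positivity, fun z hz => ?_⟩
    have := hms hz
    simp only [Set.mem_iUnion] at this
    obtain ⟨m, hmms, p, hpt, hpz⟩ := this
    refine ⟨p, hpt, ?_⟩
    rw [mem_ball] at hpz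
    have hmle : m ≤ m₀ := Finset.le_sup (f := id) hmms
    have : 1 / ((m₀ : ℝ) + 1) ≤ 1 / ((m : ℝ) + 1) := by
      apply one_div_le_one_div_of_le (by positivity)
      exact_mod_cast Nat.succ_le_succ hmle
    linarith
  -- the tents
  set A : ℝ := M / (4 * (N + 1)) with hAdef
  have hA : 0 < A := by positivity
  set tent : Fin N × K₁ → EuclideanSpace ℝ (Fin n) → ℝ :=
    fun p z => A * cutf (r p.2 - ζ / 2) (ζ / 2) (dist z (p.2 : EuclideanSpace ℝ (Fin n))) with htentdef
  have tent_nonneg : ∀ p z, 0 ≤ tent p z := fun p z => mul_nonneg hA.le (cutf_nonneg _ _ _)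
  have tent_le : ∀ p z, tent p z ≤ A := by
    intro p z
    calc tent p z ≤ A * 1 := by
          apply mul_le_mul_of_nonneg_left (cutf_le_one _ _ _) hA.le
      _ = A := mul_one A
  have tent_ball : ∀ p z, tent p z ≠ 0 → dist z (p.2 : EuclideanSpace ℝ (Fin n)) < r p.2 - ζ / 2 := by
    intro p z h
    have : cutf (r p.2 - ζ / 2) (ζ / 2) (dist z (p.2 : EuclideanSpace ℝ (Fin n))) ≠ 0 := by
      intro h0; apply h; rw [htentdef]; simp [h0]
    exact lt_of_cutf_ne_zero (by positivity) this
  have tent_eq : ∀ p z, dist z (p.2 : EuclideanSpace ℝ (Fin n)) < r p.2 - ζ → tent p z = A := by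
    intro p z h
    rw [htentdef]
    simp only
    rw [cutf_eq_one (by positivity) (by linarith), mul_one]
  have tent_cont : ∀ p, Continuous (tent p) := by
    intro p
    exact continuous_const.mul ((cutf_continuous _ _).comp (continuous_id.dist continuous_const))
  have tent_supp : ∀ p, tsupport (tent p) ⊆ closedBall (p.2 : EuclideanSpace ℝ (Fin n)) (r p.2 - ζ / 2) := by
    intro p
    apply closure_minimal _ isClosed_closedBall
    intro z hz
    exact (tent_ball p z hz).le
  -- upper bound on sums over t
  have sum_le_A : ∀ z (i : Fin N), ∑ p ∈ t.filter (fun p => p.1 = i), tent p z ≤ A := by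
    intro z i
    by_cases hz : ∀ p ∈ t.filter (fun p => p.1 = i), tent p z = 0
    · rw [Finset.sum_eq_zero hz]; exact hA.le
    · push_neg at hz
      obtain ⟨p₀, hp₀t, hp₀⟩ := hz
      have : ∑ p ∈ t.filter (fun p => p.1 = i), tent p z = tent p₀ z := by
        apply Finset.sum_eq_single_of_mem p₀ hp₀t
        intro p hpt hne
        by_contra hp
        -- both tents nonzero: z in both closed balls, contradiction with disjointness
        have hzp : z ∈ closedBall (p.2 : EuclideanSpace ℝ (Fin n)) (r p.2) :=
          mem_closedBall.2 (by have := tent_ball p z hp; linarith)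
        have hzp₀ : z ∈ closedBall (p₀.2 : EuclideanSpace ℝ (Fin n)) (r p₀.2) :=
          mem_closedBall.2 (by have := tent_ball p₀ z hp₀; linarith)
        have hip : p.1 = i := (Finset.mem_filter.1 hpt).2
        have hip₀ : p₀.1 = i := (Finset.mem_filter.1 hp₀t).2
        have hps : p.2 ∈ s i := hip ▸ htmem p (Finset.mem_filter.1 hpt).1
        have hp₀s : p₀.2 ∈ s i := hip₀ ▸ htmem p₀ (Finset.mem_filter.1 hp₀t).1
        have hne2 : p.2 ≠ p₀.2 := by
          intro h2
          apply hne
          exact Prod.ext (hip.trans hip₀.symm) h2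
        have hdisj := hsd i hps hp₀s hne2
        exact (Set.disjoint_left.1 hdisj) hzp hzp₀
      rw [this]
      exact tent_le p₀ z
  have sum_split : ∀ z, ∑ p ∈ t, tent p z
      = ∑ i : Fin N, ∑ p ∈ t.filter (fun p => p.1 = i), tent p z := by
    intro z
    exact (Finset.sum_fiberwise t (fun p => p.1) (fun p => tent p z)).symm
  have sum_le_u : ∀ z, ∑ p ∈ t, tent p z ≤ u z := by
    intro z
    by_cases hz : ∀ p ∈ t, tent p z = 0
    · rw [Finset.sum_eq_zero hz]; exact hupos z
    · push_neg at hz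
      obtain ⟨p₀, hp₀t, hp₀⟩ := hz
      have hd : dist z (p₀.2 : EuclideanSpace ℝ (Fin n)) < r p₀.2 - ζ / 2 := tent_ball p₀ z hp₀
      have hd2 : dist z (p₀.2 : EuclideanSpace ℝ (Fin n)) < δ := by
        have := hrδ p₀.2
        linarith
      have hx₁ : ((p₀.2 : K₁) : EuclideanSpace ℝ (Fin n)) ∈ K₁ := (p₀.2 : K₁).2
      have hux : M / 2 ≤ u (p₀.2 : EuclideanSpace ℝ (Fin n)) := hx₁.2
      have huz : M / 4 ≤ u z := by
        have := hδu z (p₀.2 : EuclideanSpace ℝ (Fin n)) hd2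
        have habs := abs_lt.1 this
        linarith
      have : ∑ p ∈ t, tent p z ≤ N * A := by
        rw [sum_split z]
        calc ∑ i : Fin N, ∑ p ∈ t.filter (fun p => p.1 = i), tent p z
            ≤ ∑ _i : Fin N, A := Finset.sum_le_sum (fun i _ => sum_le_A z i)
          _ = N * A := by simp [mul_comm]
      have h1 : A * (4 * ((N : ℝ) + 1)) = M := by
        rw [hAdef]; field_simp
      have hNA : (N : ℝ) * A ≤ M / 4 := by
        nlinarith [hA.le, Nat.cast_nonneg (α := ℝ) N]
      linarith
  -- lower bound on K₁
  have sum_ge : ∀ z ∈ K₁, A ≤ ∑ p ∈ t, tent p z := by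
    intro z hz
    obtain ⟨p, hpt, hpz⟩ := hζcov z hz
    have : tent p z = A := tent_eq p z hpz
    calc A = tent p z := this.symm
      _ ≤ ∑ p ∈ t, tent p z :=
        Finset.single_le_sum (fun q _ => tent_nonneg q z) hpt
  -- package into Fin q
  set q := t.card with hqdef
  set e : ↥t ≃ Fin q := t.equivFin with hedef
  set χ : Fin q → EuclideanSpace ℝ (Fin n) → ℝ := fun k => tent ((e.symm k) : ↥t).1 with hχdef
  have hsum : ∀ z, ∑ k, χ k z = ∑ p ∈ t, tent p z := by
    intro z
    have h1 : ∑ p : ↥t, χ (e p) z = ∑ k, χ k z := Equiv.sum_comp e (fun k => χ k z)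
    have h2 : ∀ p : ↥t, χ (e p) z = tent p.1 z := by
      intro p; rw [hχdef]; simp
    calc ∑ k, χ k z = ∑ p : ↥t, χ (e p) z := h1.symm
      _ = ∑ p : ↥t, tent p.1 z := Finset.sum_congr rfl (fun p _ => h2 p)
      _ = ∑ p ∈ t, tent p z := Finset.sum_coe_sort t (fun p => tent p z)
  refine ⟨q, χ, ?_, ?_, ?_⟩
  · intro k
    set p := ((e.symm k) : ↥t).1 with hpdef
    have hpt : p ∈ t := ((e.symm k) : ↥t).2
    refine ⟨tent_cont p, fun z => tent_nonneg p z, (p.2 : EuclideanSpace ℝ (Fin n)), hK₁K (p.2 : K₁).2, r p.2,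
      hrpos p.2, hRF p.2 (r p.2) (hrpos p.2) (hrR p.2), ?_, ?_, ?_⟩
    · apply HasCompactSupport.of_support_subset_isCompact (isCompact_closedBall (p.2 : EuclideanSpace ℝ (Fin n)) (r p.2 - ζ/2))
      exact fun z hz => (tent_ball p z hz).le
    · intro z hz
      have := tent_supp p hz
      rw [mem_closedBall] at this
      rw [mem_ball]
      linarith
    · intro z w hzw
      rw [hχdef]
      simp only [← hpdef, htentdef, hzw]
  · intro z
    rw [hsum z]
    exact sum_le_u z
  · intro z hz
    rw [hsum z]
    by_cases hzK₁ : z ∈ K₁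
    · have := sum_ge z hzK₁
      have huzM := hKM z hz
      have : u z - ∑ p ∈ t, tent p z ≤ M - A := by linarith
      calc u z - ∑ p ∈ t, tent p z ≤ M - A := this
        _ = (1 - 1 / (4 * (N + 1))) * M := by
            rw [hAdef]; field_simp
    · have : ¬ (M / 2 ≤ u z) := fun h => hzK₁ ⟨hz, h⟩
      push_neg at this
      have hsnn : 0 ≤ ∑ p ∈ t, tent p z := Finset.sum_nonneg fun p _ => tent_nonneg p z
      linarith

/-- Let `K ⊆ K' ⊂ ℝ^n` be compact, and `𝓕` a family of closed balls such
that for every `x ∈ K` there is `R_x > 0` with `closedBall x R ∈ 𝓕` for all `0 < R ≤ R_x`.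
Let `φ ∈ C_c(K', [0,∞))` and `ε > 0`. Then there exist finitely many continuous nonnegative
functions `χ_1, …, χ_q`, each compactly supported in some ball `B_R(x)` of the family with
`x ∈ K`, `0 < R ≤ R_x`, and rotationally symmetric about `x`, such that `Σ χ_p ≤ φ` and
`‖Σ χ_p − φ‖_{C^0(K)} ≤ ε`. -/
theorem stmt_11 {n : ℕ}
    (K K' : Set (EuclideanSpace ℝ (Fin n)))
    (hK : IsCompact K) (hK' : IsCompact K') (hKK' : K ⊆ K')
    (𝓕 : Set (Set (EuclideanSpace ℝ (Fin n))))
    (h𝓕 : ∀ x ∈ K, ∃ Rx : ℝ, 0 < Rx ∧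
      ∀ R : ℝ, 0 < R → R ≤ Rx → Metric.closedBall x R ∈ 𝓕)
    (φ : EuclideanSpace ℝ (Fin n) → ℝ)
    (hφcont : Continuous φ) (hφc : HasCompactSupport φ) (hφsupp : tsupport φ ⊆ K')
    (hφnonneg : ∀ x, 0 ≤ φ x)
    (ε : ℝ) (hε : 0 < ε) :
    ∃ (q : ℕ) (χ : Fin q → EuclideanSpace ℝ (Fin n) → ℝ),
      (∀ p : Fin q,
        Continuous (χ p) ∧ (∀ z, 0 ≤ χ p z) ∧
        ∃ x ∈ K, ∃ R : ℝ, 0 < R ∧ Metric.closedBall x R ∈ 𝓕 ∧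
          HasCompactSupport (χ p) ∧ tsupport (χ p) ⊆ Metric.ball x R ∧
          (∀ z w, dist z x = dist w x → χ p z = χ p w)) ∧
      (∀ z, ∑ p, χ p z ≤ φ z) ∧
      (∀ z ∈ K, |∑ p, χ p z - φ z| ≤ ε) := by
  classical
  obtain ⟨N, τ, hτ, hN⟩ :=
    HasBesicovitchCovering.no_satelliteConfig (α := EuclideanSpace ℝ (Fin n))
  rcases K.eq_empty_or_nonempty with hKe | hKne
  · exact ⟨0, Fin.elim0, fun p => p.elim0, fun z => by simp [hφnonneg z],
      fun z hz => by simp [hKe] at hz⟩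
  obtain ⟨z₀, hz₀, hz₀max'⟩ := hK.exists_isMaxOn hKne hφcont.continuousOn
  have hz₀max : ∀ z ∈ K, φ z ≤ φ z₀ := fun z hz => hz₀max' hz
  set C : ℝ := φ z₀ + 1 with hCdef
  have hC : 0 < C := by have := hφnonneg z₀; linarith
  have hCK : ∀ z ∈ K, φ z ≤ C := fun z hz => by have := hz₀max z hz; linarith
  set θ : ℝ := 1 - 1 / (4 * (N + 1)) with hθdef
  have hfrac0 : (0:ℝ) < 1 / (4 * ((N:ℝ) + 1)) := by positivity
  have hfrac : 1 / (4 * ((N : ℝ) + 1)) ≤ 1 / 4 := by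
    apply one_div_le_one_div_of_le (by norm_num)
    have : (0:ℝ) ≤ N := Nat.cast_nonneg N
    linarith
  have hθ0 : 0 < θ := by rw [hθdef]; linarith
  have hθ1 : θ < 1 := by rw [hθdef]; linarith
  -- main induction
  have main : ∀ k : ℕ, ∃ (q : ℕ) (χ : Fin q → EuclideanSpace ℝ (Fin n) → ℝ),
      (∀ p : Fin q,
        Continuous (χ p) ∧ (∀ z, 0 ≤ χ p z) ∧
        ∃ x ∈ K, ∃ R : ℝ, 0 < R ∧ Metric.closedBall x R ∈ 𝓕 ∧
          HasCompactSupport (χ p) ∧ tsupport (χ p) ⊆ Metric.ball x R ∧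
          (∀ z w, dist z x = dist w x → χ p z = χ p w)) ∧
      (∀ z, ∑ p, χ p z ≤ φ z) ∧
      (∀ z ∈ K, φ z - ∑ p, χ p z ≤ θ ^ k * C) := by
    intro k
    induction k with
    | zero =>
      refine ⟨0, Fin.elim0, fun p => p.elim0, fun z => by simp [hφnonneg z], fun z hz => ?_⟩
      simp only [Finset.univ_eq_empty, Finset.sum_empty, pow_zero, one_mul]
      have := hCK z hz
      linarith
    | succ k ih =>
      obtain ⟨q, χ, hprops, hle, hdec⟩ := ih
      set u : EuclideanSpace ℝ (Fin n) → ℝ := fun z => φ z - ∑ p, χ p z with hudef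
      have hχcont : ∀ p, Continuous (χ p) := fun p => (hprops p).1
      have hχsupp : ∀ p, HasCompactSupport (χ p) := by
        intro p
        obtain ⟨_, _, x, hx, R, hR, hRF, hcs, _⟩ := hprops p
        exact hcs
      have husum : HasCompactSupport (fun z => ∑ p, χ p z) := by
        have : ∀ sf : Finset (Fin q), HasCompactSupport (fun z => ∑ p ∈ sf, χ p z) := by
          intro sf
          induction sf using Finset.induction_on with
          | empty =>
            apply HasCompactSupport.of_support_subset_isCompact isCompact_empty
            simp
          | insert _ _ hnm ih2 =>
            simp only [Finset.sum_insert hnm]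
            exact (hχsupp _).add ih2
        exact this Finset.univ
      have hu : Continuous u := hφcont.sub (continuous_finset_sum _ fun p _ => hχcont p)
      have huc : HasCompactSupport u := by
        apply HasCompactSupport.of_support_subset_isCompact (hφc.union husum)
        intro z hz
        by_cases h1 : φ z = 0
        · right
          apply subset_tsupport
          intro h2
          apply hz
          rw [hudef]
          simp only [h1, h2, sub_zero]
        · exact Or.inl (subset_tsupport _ h1)
      have hupos : ∀ z, 0 ≤ u z := fun z => by
        rw [hudef]; have := hle z; simp only; linarith
      have hM : 0 < θ ^ k * C := by positivity
      obtain ⟨q', χ', hprops', hle', hdec'⟩ := step_lemma hτ hN K hK 𝓕 h𝓕 u hu huc hupos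
        (θ ^ k * C) hM (fun z hz => hdec z hz)
      refine ⟨q + q', Fin.append χ χ', ?_, ?_, ?_⟩
      · intro p
        refine Fin.addCases (fun i => ?_) (fun i => ?_) p
        · rw [Fin.append_left]; exact hprops i
        · rw [Fin.append_right]; exact hprops' i
      · intro z
        rw [Fin.sum_univ_add]
        simp only [Fin.append_left, Fin.append_right]
        have h1 := hle' z
        have h2 := hle z
        rw [hudef] at h1
        simp only at h1
        linarith
      · intro z hz
        rw [Fin.sum_univ_add]
        simp only [Fin.append_left, Fin.append_right]
        have h1 := hdec' z hz
        rw [hudef] at h1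
        simp only at h1
        have hθeq : (1 - 1 / (4 * ((N:ℝ) + 1))) * (θ ^ k * C) = θ ^ (k + 1) * C := by
          rw [hθdef, pow_succ]; ring
        linarith [hθeq ▸ h1]
  -- choose k with θ ^ k * C ≤ ε
  obtain ⟨k, hk⟩ := exists_pow_lt_of_lt_one (show (0:ℝ) < ε / C by positivity) hθ1
  have hkC : θ ^ k * C ≤ ε := by
    have := (lt_div_iff₀ hC).1 hk
    linarith
  obtain ⟨q, χ, hprops, hle, hdec⟩ := main k
  refine ⟨q, χ, hprops, hle, fun z hz => ?_⟩
  have h1 := hdec z hz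
  have h2 := hle z
  rw [abs_of_nonpos (by linarith)]
  linarith
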